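/- The degree of a graded quotient by a monomial ideal is invariant under Gröbner deformation: for a homogeneous ideal I in a polynomial ring S over a field with a graded term order, the Hilbert function of S/I equals the Hilbert function of S/in(I), where in(I) is the initial ideal. -/

import Mathlib

open MvPolynomial

/-- The leading exponent of a polynomial with respect to a monomial order:
the maximum, for the order, of the exponents in its support. -/
noncomputable def leadExp {σ : Type*} (m : MonomialOrder σ) {k : Type*} [Field k]
    (f : MvPolynomial σ k) : σ →₀ ℕ :=
  m.toSyn.symm (f.support.sup (fun d => m.toSyn d))

/-- The initial ideal of `I`: generated by the leading monomials of the nonzero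
elements of `I`. -/
noncomputable def initialIdeal {σ : Type*} (m : MonomialOrder σ) {k : Type*} [Field k]
    (I : Ideal (MvPolynomial σ k)) : Ideal (MvPolynomial σ k) :=
  Ideal.span {g | ∃ f ∈ I, f ≠ 0 ∧ g = monomial (leadExp m f) (1 : k)}

/-- The Hilbert function of a graded quotient `S/I`. -/
noncomputable def hilbFn (k : Type*) [Field k] {n : ℕ}
    (I : Ideal (MvPolynomial (Fin n) k)) (d : ℕ) : ℕ :=
  Module.finrank k
    ((homogeneousSubmodule (Fin n) k d) ⧸
      (Submodule.comap (homogeneousSubmodule (Fin n) k d).subtype (I.restrictScalars k)))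

section Aux

variable {σ : Type*} (m : MonomialOrder σ) {k : Type*} [Field k]

theorem toSyn_leadExp (f : MvPolynomial σ k) :
    m.toSyn (leadExp m f) = f.support.sup (fun d => m.toSyn d) :=
  m.toSyn.apply_symm_apply _

theorem leadExp_mem_support {f : MvPolynomial σ k} (hf : f ≠ 0) :
    leadExp m f ∈ f.support := by
  obtain ⟨b, hb, hs⟩ := f.support.exists_mem_eq_sup (support_nonempty.mpr hf)
    (fun d => m.toSyn d)
  have : leadExp m f = b := by
    rw [leadExp, hs, m.toSyn.symm_apply_apply]
  rwa [this]

theorem le_toSyn_leadExp {f : MvPolynomial σ k} {a : σ →₀ ℕ} (ha : a ∈ f.support) :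
    m.toSyn a ≤ m.toSyn (leadExp m f) := by
  rw [toSyn_leadExp]
  exact Finset.le_sup ha

theorem coeff_eq_zero_of_toSyn_lt {f : MvPolynomial σ k} {a : σ →₀ ℕ}
    (h : m.toSyn (leadExp m f) < m.toSyn a) : coeff a f = 0 := by
  by_contra h'
  exact absurd (le_toSyn_leadExp m (mem_support_iff.mpr h')) (not_le.mpr h)

theorem leadExp_monomial {a : σ →₀ ℕ} {c : k} (hc : c ≠ 0) :
    leadExp m (monomial a c) = a := by
  classical
  rw [leadExp, support_monomial, if_neg hc, Finset.sup_singleton, m.toSyn.symm_apply_apply]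

theorem leadExp_monomial_mul {f : MvPolynomial σ k} (hf : f ≠ 0) (b : σ →₀ ℕ) :
    leadExp m (monomial b (1 : k) * f) = b + leadExp m f := by
  classical
  apply m.toSyn.injective
  apply le_antisymm
  · rw [toSyn_leadExp]
    apply Finset.sup_le
    intro c hc
    have hc' := MvPolynomial.support_mul (monomial b (1 : k)) f hc
    rw [support_monomial, if_neg (one_ne_zero : (1 : k) ≠ 0)] at hc'
    obtain ⟨u, hu, v, hv, rfl⟩ := Finset.mem_add.mp hc'
    obtain rfl : u = b := Finset.mem_singleton.mp hu
    rw [map_add, map_add]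
    exact add_le_add le_rfl (le_toSyn_leadExp m hv)
  · apply le_toSyn_leadExp
    rw [mem_support_iff, coeff_monomial_mul, one_mul]
    exact mem_support_iff.mp (leadExp_mem_support m hf)

variable (hgraded : ∀ u v : σ →₀ ℕ,
    (u.sum fun _ e => e) < (v.sum fun _ e => e) → m.toSyn u < m.toSyn v)

include hgraded in
theorem sum_leadExp {f : MvPolynomial σ k} (hf : f ≠ 0) :
    ((leadExp m f).sum fun _ e => e) = f.totalDegree := by
  apply le_antisymm
  · exact Finset.le_sup (f := fun s => s.sum fun _ e => e) (leadExp_mem_support m hf)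
  · rw [totalDegree]
    apply Finset.sup_le
    intro c hc
    by_contra hlt
    push_neg at hlt
    exact absurd (le_toSyn_leadExp m hc) (not_le.mpr (hgraded _ _ hlt))

include hgraded in
theorem homogeneousComponent_totalDegree_ne_zero {f : MvPolynomial σ k} (hf : f ≠ 0) :
    homogeneousComponent f.totalDegree f ≠ 0 := by
  have h1 : coeff (leadExp m f) (homogeneousComponent f.totalDegree f) ≠ 0 := by
    rw [coeff_homogeneousComponent, if_pos]
    · exact mem_support_iff.mp (leadExp_mem_support m hf)
    · rw [← sum_leadExp m hgraded hf]; rfl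
  intro h0
  rw [h0, coeff_zero] at h1
  exact h1 rfl

include hgraded in
theorem leadExp_homogeneousComponent_totalDegree {f : MvPolynomial σ k} (hf : f ≠ 0) :
    leadExp m (homogeneousComponent f.totalDegree f) = leadExp m f := by
  apply m.toSyn.injective
  apply le_antisymm
  · rw [toSyn_leadExp]
    apply Finset.sup_le
    intro c hc
    apply le_toSyn_leadExp
    rw [mem_support_iff] at hc ⊢
    rw [coeff_homogeneousComponent] at hc
    intro h
    rw [h, ite_self] at hc
    exact hc rfl
  · apply le_toSyn_leadExp
    rw [mem_support_iff, coeff_homogeneousComponent, if_pos]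
    · exact mem_support_iff.mp (leadExp_mem_support m hf)
    · rw [← sum_leadExp m hgraded hf]; rfl

/-- The dimension of a finite-dimensional space of polynomials equals the number of
its leading exponents. -/
theorem finrank_eq_ncard_leadExp (V : Submodule k (MvPolynomial σ k))
    [FiniteDimensional k V] :
    Module.finrank k V = Set.ncard {a : σ →₀ ℕ | ∃ f ∈ V, f ≠ 0 ∧ leadExp m f = a} := by
  classical
  set E : Set (σ →₀ ℕ) := {a : σ →₀ ℕ | ∃ f ∈ V, f ≠ 0 ∧ leadExp m f = a} with hE
  have hchoice : ∀ a : E, ∃ f, f ∈ V ∧ f ≠ 0 ∧ leadExp m f = (a : σ →₀ ℕ) := by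
    rintro ⟨a, f, hfV, hf0, hfl⟩
    exact ⟨f, hfV, hf0, hfl⟩
  choose F hFV hF0 hFl using hchoice
  have hFcoeff : ∀ a : E, coeff (a : σ →₀ ℕ) (F a) ≠ 0 := by
    intro a
    rw [← hFl a]
    exact mem_support_iff.mp (leadExp_mem_support m (hF0 a))
  -- the chosen polynomials are linearly independent
  have hli : LinearIndependent k F := by
    rw [linearIndependent_iff']
    intro s c hsum i hi
    by_contra hci
    have hTne : (s.filter fun j => c j ≠ 0).Nonempty := ⟨i, Finset.mem_filter.mpr ⟨hi, hci⟩⟩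
    obtain ⟨j, hj, hjmax⟩ := (s.filter fun j => c j ≠ 0).exists_max_image
      (fun j => m.toSyn (j : σ →₀ ℕ)) hTne
    have hjs : j ∈ s := (Finset.mem_filter.mp hj).1
    have hjc : c j ≠ 0 := (Finset.mem_filter.mp hj).2
    have := congrArg (coeff (j : σ →₀ ℕ)) hsum
    rw [coeff_sum, coeff_zero] at this
    rw [Finset.sum_eq_single_of_mem j hjs] at this
    · rw [coeff_smul, smul_eq_mul] at this
      exact hjc (by
        rcases mul_eq_zero.mp this with h | h
        · exact h
        · exact absurd h (hFcoeff j))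
    · intro b hb hbj
      rcases eq_or_ne (c b) 0 with h | h
      · rw [coeff_smul, h, zero_smul]
      · rw [coeff_smul, smul_eq_mul]
        have hble := hjmax b (Finset.mem_filter.mpr ⟨hb, h⟩)
        have hblt : m.toSyn (b : σ →₀ ℕ) < m.toSyn (j : σ →₀ ℕ) := by
          rcases lt_or_eq_of_le hble with h' | h'
          · exact h'
          · exact absurd (Subtype.ext (m.toSyn.injective h')) hbj
        rw [coeff_eq_zero_of_toSyn_lt m (by rw [hFl b]; exact hblt), mul_zero]
  -- the chosen polynomials span V
  have hspan : ∀ f, f ∈ V → f ∈ Submodule.span k (Set.range F) := by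
    have main : ∀ s : m.syn, ∀ f, f ∈ V → m.toSyn (leadExp m f) = s →
        f ∈ Submodule.span k (Set.range F) := by
      intro s
      induction s using WellFoundedLT.induction with
      | _ s ih =>
        intro f hfV hfs
        by_cases hf0 : f = 0
        · rw [hf0]; exact Submodule.zero_mem _
        have haE : leadExp m f ∈ E := ⟨f, hfV, hf0, rfl⟩
        set a : E := ⟨leadExp m f, haE⟩ with ha
        have haF : F a ∈ Submodule.span k (Set.range F) :=
          Submodule.subset_span ⟨a, rfl⟩
        set c : k := coeff (leadExp m f) f / coeff (leadExp m f) (F a) with hc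
        set g : MvPolynomial σ k := f - c • F a with hg
        have hfg : f = g + c • F a := by rw [hg]; ring
        have hgV : g ∈ V := Submodule.sub_mem V hfV (Submodule.smul_mem V c (hFV a))
        by_cases hg0 : g = 0
        · rw [hfg, hg0, zero_add]
          exact Submodule.smul_mem _ c haF
        · -- all coefficients of g at exponents ≥ leadExp f vanish
          have hcoeff : ∀ b : σ →₀ ℕ, m.toSyn (leadExp m f) ≤ m.toSyn b →
              coeff b g = 0 := by
            intro b hb
            rcases lt_or_eq_of_le hb with h' | h'
            · rw [hg, coeff_sub, coeff_smul, smul_eq_mul,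
                coeff_eq_zero_of_toSyn_lt m h',
                coeff_eq_zero_of_toSyn_lt m (by rw [hFl a]; exact h'), mul_zero, sub_zero]
            · have hb' : b = leadExp m f := m.toSyn.injective h'.symm
              rw [hg, coeff_sub, coeff_smul, smul_eq_mul, hb', hc]
              have : (leadExp m f : σ →₀ ℕ) = (a : σ →₀ ℕ) := rfl
              rw [div_mul_cancel₀ _ (by rw [this]; exact hFcoeff a), sub_self]
          have hlt : m.toSyn (leadExp m g) < s := by
            rw [← hfs]
            rcases lt_or_ge (m.toSyn (leadExp m g)) (m.toSyn (leadExp m f)) with h | h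
            · exact h
            · exact absurd (hcoeff _ h) (mem_support_iff.mp (leadExp_mem_support m hg0))
          have := ih _ hlt g hgV rfl
          rw [hfg]
          exact Submodule.add_mem _ this (Submodule.smul_mem _ c haF)
    intro f hf
    exact main _ f hf rfl
  -- assemble
  set G : E → V := fun a => ⟨F a, hFV a⟩ with hG
  have hliG : LinearIndependent k G := by
    have : F = V.subtype ∘ G := rfl
    rw [this] at hli
    exact LinearIndependent.of_comp V.subtype hli
  haveI : Finite E := hliG.finite
  haveI : Fintype E := Fintype.ofFinite E
  have hspanG : ⊤ ≤ Submodule.span k (Set.range G) := by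
    rintro ⟨x, hxV⟩ _
    have hx : x ∈ Submodule.span k (Set.range F) := hspan x hxV
    have : Set.range F = V.subtype '' Set.range G := by
      rw [← Set.range_comp]; rfl
    rw [this, ← Submodule.map_span] at hx
    obtain ⟨y, hy, hyx⟩ := hx
    have : y = ⟨x, hxV⟩ := Subtype.ext hyx
    rwa [this] at hy
  have B := Module.Basis.mk hliG hspanG
  rw [Module.finrank_eq_card_basis B, ← Nat.card_coe_set_eq, Nat.card_eq_fintype_card]

end Aux

set_option maxHeartbeats 1000000 in
set_option synthInstance.maxHeartbeats 400000 in
/-- Gröbner deformation preserves Hilbert functions: for a homogeneous ideal `I` and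
a monomial order refining total degree, the Hilbert function of `S/I` equals that of
`S/in(I)`. -/
theorem hilbFn_eq_hilbFn_initialIdeal {k : Type*} [Field k] {n : ℕ}
    (m : MonomialOrder (Fin n))
    (hgraded : ∀ u v : Fin n →₀ ℕ,
      (u.sum fun _ e => e) < (v.sum fun _ e => e) → m.toSyn u < m.toSyn v)
    (I : Ideal (MvPolynomial (Fin n) k))
    (hI : ∀ f ∈ I, ∀ d : ℕ, homogeneousComponent d f ∈ I) :
    ∀ d : ℕ, hilbFn k I d = hilbFn k (initialIdeal m I) d := by
  intro d
  classical
  set Sd := homogeneousSubmodule (Fin n) k d with hSd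
  -- finite-dimensionality
  have hSdle : Sd ≤ restrictTotalDegree (Fin n) k d := by
    intro p hp
    rw [mem_restrictTotalDegree]
    exact ((mem_homogeneousSubmodule d p).mp hp).totalDegree_le
  have hfd : ∀ V : Submodule k (MvPolynomial (Fin n) k),
      V ≤ restrictTotalDegree (Fin n) k d → FiniteDimensional k V := fun V hle =>
    Module.Finite.equiv (Submodule.comapSubtypeEquivOfLe hle)
  haveI hfdSd : FiniteDimensional k Sd := hfd Sd hSdle
  haveI hfd1 : FiniteDimensional k ((I.restrictScalars k) ⊓ Sd : Submodule k _) :=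
    hfd _ (le_trans inf_le_right hSdle)
  haveI hfd2 : FiniteDimensional k
      (((initialIdeal m I).restrictScalars k) ⊓ Sd : Submodule k _) :=
    hfd _ (le_trans inf_le_right hSdle)
  -- the Hilbert function as a difference of dimensions
  have key : ∀ J : Ideal (MvPolynomial (Fin n) k),
      hilbFn k J d =
        Module.finrank k Sd -
          Module.finrank k ((J.restrictScalars k) ⊓ Sd : Submodule k _) := by
    intro J
    have h1 : Submodule.comap Sd.subtype (J.restrictScalars k) =
        Submodule.comap Sd.subtype ((J.restrictScalars k) ⊓ Sd) := by
      ext x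
      simp only [Submodule.mem_comap, Submodule.mem_inf]
      exact ⟨fun h => ⟨h, x.2⟩, fun h => h.1⟩
    have e := Submodule.comapSubtypeEquivOfLe
      (inf_le_right : (J.restrictScalars k) ⊓ Sd ≤ Sd)
    have h2 := Submodule.finrank_quotient_add_finrank
      (Submodule.comap Sd.subtype ((J.restrictScalars k) ⊓ Sd))
    have h3 : Module.finrank k
        (Submodule.comap Sd.subtype ((J.restrictScalars k) ⊓ Sd)) =
        Module.finrank k ((J.restrictScalars k) ⊓ Sd : Submodule k _) :=
      LinearEquiv.finrank_eq e
    rw [hilbFn]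
    show Module.finrank k
        (Sd ⧸ Submodule.comap Sd.subtype (Submodule.restrictScalars k J)) =
      Module.finrank k Sd -
        Module.finrank k ((J.restrictScalars k) ⊓ Sd : Submodule k _)
    rw [h1]
    omega
  rw [key I, key (initialIdeal m I)]
  congr 1
  -- equality of sets of degree-d leading exponents
  have hsets : {a : Fin n →₀ ℕ | ∃ f ∈ ((I.restrictScalars k) ⊓ Sd : Submodule k _),
        f ≠ 0 ∧ leadExp m f = a} =
      {a : Fin n →₀ ℕ | ∃ f ∈ (((initialIdeal m I).restrictScalars k) ⊓ Sd :
        Submodule k _), f ≠ 0 ∧ leadExp m f = a} := by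
    have hdegsum : ∀ u : Fin n →₀ ℕ, (u.sum fun _ e => e) = u.degree := fun u => rfl
    ext a
    simp only [Set.mem_setOf_eq, Submodule.mem_inf, Submodule.restrictScalars_mem]
    constructor
    · rintro ⟨f, ⟨hfI, hfSd⟩, hf0, rfl⟩
      have hfhom : f.IsHomogeneous d := (mem_homogeneousSubmodule d f).mp hfSd
      have hadeg : (leadExp m f).degree = d := by
        rw [Finsupp.degree_eq_weight_one]
        exact hfhom (mem_support_iff.mp (leadExp_mem_support m hf0))
      refine ⟨monomial (leadExp m f) (1 : k), ⟨?_, ?_⟩, ?_, ?_⟩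
      · exact Ideal.subset_span ⟨f, hfI, hf0, rfl⟩
      · exact (mem_homogeneousSubmodule _ _).mpr (isHomogeneous_monomial _ hadeg)
      · rw [Ne, monomial_eq_zero]; exact one_ne_zero
      · exact leadExp_monomial m one_ne_zero
    · rintro ⟨f, ⟨hfJ, hfSd⟩, hf0, rfl⟩
      have hfhom : f.IsHomogeneous d := (mem_homogeneousSubmodule d f).mp hfSd
      -- every exponent of an element of the initial ideal is b + leadExp g
      have hsupp : ∀ c ∈ f.support, ∃ b g, g ∈ I ∧ g ≠ 0 ∧ c = b + leadExp m g := by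
        have : ∀ x, x ∈ initialIdeal m I →
            ∀ c ∈ x.support, ∃ b g, g ∈ I ∧ g ≠ 0 ∧ c = b + leadExp m g := by
          intro x hx
          refine Submodule.span_induction ?_ ?_ ?_ ?_ hx
          · rintro p ⟨g, hgI, hg0, rfl⟩ c hc
            rw [support_monomial, if_neg (one_ne_zero : (1:k) ≠ 0)] at hc
            exact ⟨0, g, hgI, hg0, by rw [Finset.mem_singleton.mp hc, zero_add]⟩
          · intro c hc; simp at hc
          · intro p q _ _ hp hq c hc
            rcases Finset.mem_union.mp (MvPolynomial.support_add hc) with h | h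
            · exact hp c h
            · exact hq c h
          · intro r p _ hp c hc
            have hc' := MvPolynomial.support_mul r p (by simpa using hc)
            obtain ⟨u, _, v, hv, rfl⟩ := Finset.mem_add.mp hc'
            obtain ⟨b, g, hgI, hg0, hbg⟩ := hp v hv
            exact ⟨u + b, g, hgI, hg0, by rw [hbg, add_assoc]⟩
        exact this f hfJ
      obtain ⟨b, g, hgI, hg0, hbg⟩ := hsupp _ (leadExp_mem_support m hf0)
      set g' := homogeneousComponent g.totalDegree g with hg'
      have hg'I : g' ∈ I := hI g hgI _
      have hg'0 : g' ≠ 0 := homogeneousComponent_totalDegree_ne_zero m hgraded hg0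
      have hg'lead : leadExp m g' = leadExp m g :=
        leadExp_homogeneousComponent_totalDegree m hgraded hg0
      have hg'hom : g'.IsHomogeneous g.totalDegree := homogeneousComponent_isHomogeneous _ g
      set h := monomial b (1 : k) * g' with hh
      have hhI : h ∈ I := Ideal.mul_mem_left _ _ hg'I
      have hh0 : h ≠ 0 := mul_ne_zero (by rw [Ne, monomial_eq_zero]; exact one_ne_zero) hg'0
      have hhlead : leadExp m h = leadExp m f := by
        rw [hh, leadExp_monomial_mul m hg'0, hg'lead, ← hbg]
      have hadeg : (leadExp m f).degree = d := by
        rw [Finsupp.degree_eq_weight_one]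
        exact hfhom (mem_support_iff.mp (leadExp_mem_support m hf0))
      have hhhom : h.IsHomogeneous d := by
        have h1 : h.IsHomogeneous (b.degree + g.totalDegree) :=
          (isHomogeneous_monomial (1 : k) rfl).mul hg'hom
        have h2 : b.degree + g.totalDegree = d := by
          have h3 : (leadExp m g).degree = g.totalDegree := by
            rw [← hdegsum]; exact sum_leadExp m hgraded hg0
          have h4 : (leadExp m f).degree = b.degree + (leadExp m g).degree := by
            rw [hbg]
            simp [Finsupp.degree_eq_weight_one, map_add]
          rw [← h3, ← h4, hadeg]
        rwa [h2] at h1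
      exact ⟨h, ⟨hhI, (mem_homogeneousSubmodule _ _).mpr hhhom⟩, hh0, hhlead⟩
  rw [finrank_eq_ncard_leadExp m ((I.restrictScalars k) ⊓ Sd),
    finrank_eq_ncard_leadExp m (((initialIdeal m I).restrictScalars k) ⊓ Sd), hsets]
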